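/- Let P and Q be probability distributions on a finite set Ω with power function g = Pow(P‖Q), and let γ₁, γ₂ ≥ 1. Let Q̂ be a probability distribution on Ω such that Q̂(ω) = Q(ω) whenever P(ω) = 0, and (1/γ₂)·Q(ω) ≤ Q̂(ω) ≤ γ₁·Q(ω) whenever P(ω) > 0. Then for every x ∈ [0,1], Pow(P‖Q̂)(x) ≤ min{ min{g(0) + γ₁·(g(x) − g(0)), 1}, (1/γ₂)·g(x) + 1 − 1/γ₂ }. -/

import Mathlib

open Finset

/-- The power function `Pow(P ‖ Q)(x)`: the maximum of `Σ t·Q` over `t : Ω → [0,1]`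
with `Σ t·P ≤ x` (fractional knapsack). -/
noncomputable def powFn {Ω : Type*} [Fintype Ω] (P Q : Ω → ℝ) (x : ℝ) : ℝ :=
  sSup {v : ℝ | ∃ t : Ω → ℝ, (∀ ω, 0 ≤ t ω ∧ t ω ≤ 1) ∧
    (∑ ω, t ω * P ω) ≤ x ∧ v = ∑ ω, t ω * Q ω}


lemma powFn_bddAbove {Ω : Type*} [Fintype Ω] (P Q : Ω → ℝ) (hQ : ∀ ω, 0 ≤ Q ω) (x : ℝ) :
    BddAbove {v : ℝ | ∃ t : Ω → ℝ, (∀ ω, 0 ≤ t ω ∧ t ω ≤ 1) ∧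
      (∑ ω, t ω * P ω) ≤ x ∧ v = ∑ ω, t ω * Q ω} := by
  refine ⟨∑ ω, Q ω, ?_⟩
  rintro v ⟨t, ht, -, rfl⟩
  exact Finset.sum_le_sum fun ω _ => mul_le_of_le_one_left (hQ ω) (ht ω).2

lemma le_powFn {Ω : Type*} [Fintype Ω] (P Q : Ω → ℝ) (hQ : ∀ ω, 0 ≤ Q ω) (x : ℝ)
    (t : Ω → ℝ) (ht : ∀ ω, 0 ≤ t ω ∧ t ω ≤ 1) (hx : (∑ ω, t ω * P ω) ≤ x) :
    ∑ ω, t ω * Q ω ≤ powFn P Q x :=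
  le_csSup (powFn_bddAbove P Q hQ x) ⟨t, ht, hx, rfl⟩

lemma powFn_zero_eq {Ω : Type*} [Fintype Ω] (P Q : Ω → ℝ)
    (hP : ∀ ω, 0 ≤ P ω) (hQ : ∀ ω, 0 ≤ Q ω) :
    powFn P Q 0 = ∑ ω ∈ Finset.univ.filter (fun ω => P ω = 0), Q ω := by
  apply le_antisymm
  · apply Real.sSup_le
    · rintro v ⟨t, ht, hx, rfl⟩
      have hz : ∀ ω, t ω * P ω = 0 := by
        intro ω
        have := (Finset.sum_eq_zero_iff_of_nonneg
          (fun ω _ => mul_nonneg (ht ω).1 (hP ω))).1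
          (le_antisymm hx (Finset.sum_nonneg fun ω _ => mul_nonneg (ht ω).1 (hP ω)))
        exact this ω (Finset.mem_univ ω)
      rw [← Finset.sum_filter_add_sum_filter_not Finset.univ (fun ω => P ω = 0)]
      have h2 : ∑ ω ∈ Finset.univ.filter (fun ω => ¬ P ω = 0), t ω * Q ω = 0 := by
        apply Finset.sum_eq_zero
        intro ω hω
        have hPω : P ω ≠ 0 := (Finset.mem_filter.1 hω).2
        have : t ω = 0 := by
          have := hz ω
          rcases mul_eq_zero.1 this with h | h
          · exact h
          · exact absurd h hPω
        simp [this]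
      rw [h2, add_zero]
      exact Finset.sum_le_sum fun ω _ => mul_le_of_le_one_left (hQ ω) (ht ω).2
    · exact Finset.sum_nonneg fun ω _ => hQ ω
  · have := le_powFn P Q hQ 0 (fun ω => if P ω = 0 then 1 else 0)
      (fun ω => by split <;> norm_num) ?_
    · calc ∑ ω ∈ Finset.univ.filter (fun ω => P ω = 0), Q ω
          = ∑ ω, (if P ω = 0 then 1 else 0) * Q ω := by
            rw [Finset.sum_filter]
            congr 1; ext ω; split <;> simp
        _ ≤ powFn P Q 0 := this
    · apply le_of_eq
      apply Finset.sum_eq_zero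
      intro ω _
      split <;> simp_all

/-- **Density perturbation stretches the power curve.**
Let `P`, `Q` be probability distributions on a finite set `Ω` with power function
`g = Pow(P ‖ Q)`, and let `γ₁, γ₂ ≥ 1`.  If `Q̂` is a probability distribution with
`Q̂(ω) = Q(ω)` whenever `P(ω) = 0` and `(1/γ₂)·Q(ω) ≤ Q̂(ω) ≤ γ₁·Q(ω)` whenever
`P(ω) > 0`, then for every `x ∈ [0,1]`,
`Pow(P ‖ Q̂)(x) ≤ min{ min{g(0) + γ₁·(g(x) − g(0)), 1}, (1/γ₂)·g(x) + 1 − 1/γ₂ }`. -/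
theorem power_function_perturbation_bound
    {Ω : Type*} [Fintype Ω] (P Q Qh : Ω → ℝ)
    (hP : ∀ ω, 0 ≤ P ω) (hPsum : ∑ ω, P ω = 1)
    (hQ : ∀ ω, 0 ≤ Q ω) (hQsum : ∑ ω, Q ω = 1)
    (hQh : ∀ ω, 0 ≤ Qh ω) (hQhsum : ∑ ω, Qh ω = 1)
    (γ₁ γ₂ : ℝ) (hγ₁ : 1 ≤ γ₁) (hγ₂ : 1 ≤ γ₂)
    (hzero : ∀ ω, P ω = 0 → Qh ω = Q ω)
    (hpos : ∀ ω, 0 < P ω → (1 / γ₂) * Q ω ≤ Qh ω ∧ Qh ω ≤ γ₁ * Q ω) :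
    ∀ x ∈ Set.Icc (0:ℝ) 1,
      powFn P Qh x ≤
        min (min (powFn P Q 0 + γ₁ * (powFn P Q x - powFn P Q 0)) 1)
          ((1 / γ₂) * powFn P Q x + 1 - 1 / γ₂) := by
  intro x hx
  obtain ⟨hx0, hx1⟩ := hx
  have hg0 := powFn_zero_eq P Q hP hQ
  set Z := Finset.univ.filter (fun ω => P ω = 0) with hZ
  -- nonemptiness of the Qh feasible set
  have hne : {v : ℝ | ∃ t : Ω → ℝ, (∀ ω, 0 ≤ t ω ∧ t ω ≤ 1) ∧
      (∑ ω, t ω * P ω) ≤ x ∧ v = ∑ ω, t ω * Q ω}.Nonempty := by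
    exact ⟨0, 0, fun ω => by norm_num, by simpa using hx0, by simp⟩
  apply csSup_le
  · exact ⟨0, 0, fun ω => by norm_num, by simpa using hx0, by simp⟩
  rintro v ⟨t, ht, hxt, rfl⟩
  have htQ_le : ∑ ω, t ω * Q ω ≤ powFn P Q x := le_powFn P Q hQ x t ht hxt
  -- split into Z and Zᶜ
  have hsplit : ∑ ω, t ω * Qh ω =
      ∑ ω ∈ Z, t ω * Qh ω + ∑ ω ∈ Finset.univ.filter (fun ω => ¬ P ω = 0), t ω * Qh ω :=
    (Finset.sum_filter_add_sum_filter_not Finset.univ (fun ω => P ω = 0) _).symm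
  have hZeq : ∀ ω ∈ Z, Qh ω = Q ω := fun ω hω => hzero ω (Finset.mem_filter.1 hω).2
  have hSpos : ∀ ω ∈ Finset.univ.filter (fun ω => ¬ P ω = 0), 0 < P ω := fun ω hω =>
    lt_of_le_of_ne (hP ω) (Ne.symm (Finset.mem_filter.1 hω).2)
  -- Bound 1 : ≤ 1
  have hb1 : ∑ ω, t ω * Qh ω ≤ 1 := by
    calc ∑ ω, t ω * Qh ω ≤ ∑ ω, Qh ω :=
          Finset.sum_le_sum fun ω _ => mul_le_of_le_one_left (hQh ω) (ht ω).2
      _ = 1 := hQhsum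
  -- Bound A
  have hbA : ∑ ω, t ω * Qh ω ≤ powFn P Q 0 + γ₁ * (powFn P Q x - powFn P Q 0) := by
    -- modified test t'
    set t' : Ω → ℝ := fun ω => if P ω = 0 then 1 else t ω with ht'
    have ht'b : ∀ ω, 0 ≤ t' ω ∧ t' ω ≤ 1 := by
      intro ω; simp only [ht']; split
      · norm_num
      · exact ht ω
    have ht'P : ∑ ω, t' ω * P ω ≤ x := by
      have : ∀ ω, t' ω * P ω = t ω * P ω := by
        intro ω; simp only [ht']; split
        · simp_all
        · rfl
      rw [Finset.sum_congr rfl fun ω _ => this ω]; exact hxt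
    have hkey : ∑ ω, t' ω * Q ω ≤ powFn P Q x := le_powFn P Q hQ x t' ht'b ht'P
    have ht'split : ∑ ω, t' ω * Q ω =
        ∑ ω ∈ Z, Q ω + ∑ ω ∈ Finset.univ.filter (fun ω => ¬ P ω = 0), t ω * Q ω := by
      rw [← Finset.sum_filter_add_sum_filter_not Finset.univ (fun ω => P ω = 0) (fun ω => t' ω * Q ω)]
      congr 1
      · apply Finset.sum_congr rfl
        intro ω hω
        have : P ω = 0 := (Finset.mem_filter.1 hω).2
        simp [ht', this]
      · apply Finset.sum_congr rfl
        intro ω hω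
        have : ¬ P ω = 0 := (Finset.mem_filter.1 hω).2
        simp [ht', this]
    have hS_le : ∑ ω ∈ Finset.univ.filter (fun ω => ¬ P ω = 0), t ω * Q ω
        ≤ powFn P Q x - powFn P Q 0 := by
      rw [hg0]
      have := hkey
      rw [ht'split] at this
      linarith
    have hZ_le : ∑ ω ∈ Z, t ω * Qh ω ≤ powFn P Q 0 := by
      rw [hg0]
      apply Finset.sum_le_sum
      intro ω hω
      rw [hZeq ω hω]
      exact mul_le_of_le_one_left (hQ ω) (ht ω).2
    have hS_le2 : ∑ ω ∈ Finset.univ.filter (fun ω => ¬ P ω = 0), t ω * Qh ω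
        ≤ γ₁ * ∑ ω ∈ Finset.univ.filter (fun ω => ¬ P ω = 0), t ω * Q ω := by
      rw [Finset.mul_sum]
      apply Finset.sum_le_sum
      intro ω hω
      have h1 := (hpos ω (hSpos ω hω)).2
      have h2 := (ht ω).1
      nlinarith
    have hSQ_nonneg : (0:ℝ) ≤ ∑ ω ∈ Finset.univ.filter (fun ω => ¬ P ω = 0), t ω * Q ω :=
      Finset.sum_nonneg fun ω _ => mul_nonneg (ht ω).1 (hQ ω)
    calc ∑ ω, t ω * Qh ω
        = ∑ ω ∈ Z, t ω * Qh ω + ∑ ω ∈ Finset.univ.filter (fun ω => ¬ P ω = 0), t ω * Qh ω := hsplit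
      _ ≤ powFn P Q 0 + γ₁ * ∑ ω ∈ Finset.univ.filter (fun ω => ¬ P ω = 0), t ω * Q ω :=
          add_le_add hZ_le hS_le2
      _ ≤ powFn P Q 0 + γ₁ * (powFn P Q x - powFn P Q 0) := by
          have : γ₁ * ∑ ω ∈ Finset.univ.filter (fun ω => ¬ P ω = 0), t ω * Q ω
              ≤ γ₁ * (powFn P Q x - powFn P Q 0) :=
            mul_le_mul_of_nonneg_left hS_le (by linarith)
          linarith
  -- Bound C
  have hbC : ∑ ω, t ω * Qh ω ≤ (1 / γ₂) * powFn P Q x + 1 - 1 / γ₂ := by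
    have hγ₂pos : (0:ℝ) < γ₂ := by linarith
    have hterm : ∀ ω, (1 / γ₂) * ((1 - t ω) * Q ω) ≤ (1 - t ω) * Qh ω := by
      intro ω
      have h1 : 0 ≤ 1 - t ω := by linarith [(ht ω).2]
      by_cases hω : P ω = 0
      · rw [hzero ω hω]
        have : 1 / γ₂ ≤ 1 := by
          rw [div_le_one hγ₂pos]; exact hγ₂
        nlinarith [mul_nonneg h1 (hQ ω)]
      · have := (hpos ω (lt_of_le_of_ne (hP ω) (Ne.symm hω))).1
        nlinarith
    have hsum : (1 / γ₂) * ∑ ω, ((1 - t ω) * Q ω) ≤ ∑ ω, (1 - t ω) * Qh ω := by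
      rw [Finset.mul_sum]
      exact Finset.sum_le_sum fun ω _ => hterm ω
    have e1 : ∑ ω, ((1 - t ω) * Q ω) = 1 - ∑ ω, t ω * Q ω := by
      simp [sub_mul, Finset.sum_sub_distrib, hQsum]
    have e2 : ∑ ω, (1 - t ω) * Qh ω = 1 - ∑ ω, t ω * Qh ω := by
      simp [sub_mul, Finset.sum_sub_distrib, hQhsum]
    rw [e1, e2] at hsum
    have h1γ₂ : 0 ≤ 1 / γ₂ := by positivity
    nlinarith [mul_le_mul_of_nonneg_left htQ_le h1γ₂]
  exact le_min (le_min hbA hb1) hbC
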